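/- If G is in simplest form and has at least three prime options that are pairwise non-associated, then G is prime. -/

import Mathlib

inductive IGame : Type where
  | mk : List IGame → IGame

namespace IGame

/-- The options of a game. -/
def opts : IGame → List IGame
  | mk l => l

theorem sizeOf_lt_of_mem {x : IGame} {l : List IGame} (h : x ∈ l) :
    sizeOf x < sizeOf (mk l) := by
  have := List.sizeOf_lt_of_mem h
  simp only [mk.sizeOf_spec]
  omega

/-- `x` is an option of `G`. -/
def IsOption (x G : IGame) : Prop := x ∈ G.opts

/-- The empty game `0`. -/
def zero : IGame := mk []

/-- The game `* = {0}`. -/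
def star : IGame := mk [zero]

/-- The game `*2 = {0, *}`. -/
def star2 : IGame := mk [zero, star]

/-- The game `*3 = {0, *, *2}`. -/
def star3 : IGame := mk [zero, star, star2]

/-- Disjunctive sum of games. -/
def add : IGame → IGame → IGame
  | mk l, mk r =>
    mk ((l.attach.map fun x => add x.1 (mk r)) ++
        (r.attach.map fun y => add (mk l) y.1))
termination_by G H => (sizeOf G, sizeOf H)
decreasing_by
  · exact Prod.Lex.left _ _ (sizeOf_lt_of_mem x.2)
  · exact Prod.Lex.right _ (sizeOf_lt_of_mem y.2)

/-- `MisereP G` holds iff the misère outcome of `G` is `P`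
(i.e. `G` has at least one option and no option is a `P`-position). -/
def MisereP : IGame → Prop
  | mk l => l ≠ [] ∧ ∀ x ∈ l, ¬ MisereP x
termination_by G => sizeOf G
decreasing_by exact sizeOf_lt_of_mem (by assumption)

/-- Misère equality of games. -/
def MEquiv (G H : IGame) : Prop :=
  ∀ X : IGame, MisereP (add G X) ↔ MisereP (add H X)

theorem mequiv_refl (G : IGame) : MEquiv G G := fun _ => Iff.rfl
theorem mequiv_symm {G H : IGame} (h : MEquiv G H) : MEquiv H G := fun X => (h X).symm
theorem mequiv_trans {G H K : IGame} (h₁ : MEquiv G H) (h₂ : MEquiv H K) :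
    MEquiv G K := fun X => (h₁ X).trans (h₂ X)

/-- `G` is linked to `H` if `G + T` and `H + T` are both misère `P`-positions for some `T`. -/
def Linked (G H : IGame) : Prop :=
  ∃ T : IGame, MisereP (add G T) ∧ MisereP (add H T)

/-- `H` is a part of `G` if `G = H + X` (misère-equal) for some `X`. -/
def IsPart (H G : IGame) : Prop :=
  ∃ X : IGame, MEquiv G (add H X)

/-- `G` has a reversible option: some option `G'` of `G` has an option `G''` misère-equal
to `G`. -/
def HasReversibleOption (G : IGame) : Prop :=
  ∃ G' ∈ G.opts, ∃ G'' ∈ G'.opts, MEquiv G'' G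

/-- `G` is in simplest (canonical) form: neither `G` nor any of its hereditary
subpositions has a reversible option. -/
def Canonical (G : IGame) : Prop :=
  ∀ H : IGame, Relation.ReflTransGen IsOption H G → ¬ HasReversibleOption H

/-- `G` is even if the simplest form of `G` occurs as an option of the simplest form of
`G + *`. -/
def EvenG (G : IGame) : Prop :=
  ∃ K L : IGame, Canonical K ∧ MEquiv K G ∧ Canonical L ∧ MEquiv L (add G star) ∧
    IsOption K L

/-- `G` is odd if `G + *` is even. -/
def OddG (G : IGame) : Prop := EvenG (add G star)

/-- A unit is a game with an additive inverse (up to misère equality). -/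
def IsUnitG (U : IGame) : Prop :=
  ∃ V : IGame, MEquiv (add U V) zero

/-- `G` and `H` are associates if they differ by a unit. -/
def Assoc (G H : IGame) : Prop :=
  ∃ U : IGame, IsUnitG U ∧ MEquiv G (add H U)

/-- `G` is prime if `G` is not a unit and every part of `G` is associated to `0` or
to `G`. -/
def PrimeG (G : IGame) : Prop :=
  ¬ IsUnitG G ∧ ∀ H : IGame, IsPart H G → Assoc H zero ∨ Assoc H G

/-- The sum `n · G` of `n` copies of `G`. -/
def nsmul : ℕ → IGame → IGame
  | 0, _ => zero
  | n + 1, G => add G (nsmul n G)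

/-- The sum of a list of games. -/
def listSum (L : List IGame) : IGame := L.foldr add zero

/-- The mate `G⁻` of `G`. -/
def mate : IGame → IGame
  | mk [] => star
  | mk (x :: l) => mk ((x :: l).attach.map fun y => mate y.1)
termination_by G => sizeOf G
decreasing_by exact sizeOf_lt_of_mem y.2

/-- The formal birthday of a game. -/
def fbd : IGame → ℕ
  | mk l => (l.attach.map fun x => fbd x.1 + 1).foldr max 0
termination_by G => sizeOf G
decreasing_by exact sizeOf_lt_of_mem x.2

/-- The birthday of a game: the least formal birthday among all misère-equal games. -/
noncomputable def birthday (G : IGame) : ℕ :=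
  sInf (fbd '' {H : IGame | MEquiv G H})

instance setoid : Setoid IGame :=
  ⟨MEquiv, fun _ => mequiv_refl _, mequiv_symm, mequiv_trans⟩

/-- The monoid of misère impartial game values: games modulo misère equality. -/
def MGame := Quotient setoid


/-! ### Basic lemmas -/

theorem opts_mk (l : List IGame) : opts (mk l) = l := rfl

theorem add_def (l r : List IGame) : add (mk l) (mk r) =
    mk ((l.attach.map fun x => add x.1 (mk r)) ++
        (r.attach.map fun y => add (mk l) y.1)) := by
  rw [add]

theorem misereP_iff (G : IGame) : MisereP G ↔ G.opts ≠ [] ∧ ∀ x ∈ G.opts, ¬ MisereP x := by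
  cases G with
  | mk l => rw [MisereP]; rfl

theorem mem_opts_add {k G H : IGame} : k ∈ (add G H).opts ↔
    (∃ g ∈ G.opts, k = add g H) ∨ (∃ h ∈ H.opts, k = add G h) := by
  cases G with
  | mk l =>
    cases H with
    | mk r =>
      rw [add_def]
      simp only [opts_mk, List.mem_append, List.mem_map, List.mem_attach, true_and,
        Subtype.exists]
      constructor
      · rintro (⟨a, ha, rfl⟩ | ⟨a, ha, rfl⟩)
        · exact Or.inl ⟨a, ha, rfl⟩
        · exact Or.inr ⟨a, ha, rfl⟩
      · rintro (⟨a, ha, rfl⟩ | ⟨a, ha, rfl⟩)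
        · exact Or.inl ⟨a, ha, rfl⟩
        · exact Or.inr ⟨a, ha, rfl⟩

theorem add_left_mem_opts_add {g G H : IGame} (hg : g ∈ G.opts) :
    add g H ∈ (add G H).opts :=
  mem_opts_add.2 (Or.inl ⟨g, hg, rfl⟩)

theorem add_right_mem_opts_add {h G H : IGame} (hh : h ∈ H.opts) :
    add G h ∈ (add G H).opts :=
  mem_opts_add.2 (Or.inr ⟨h, hh, rfl⟩)

theorem opts_add_eq_nil {G H : IGame} :
    (add G H).opts = [] ↔ G.opts = [] ∧ H.opts = [] := by
  constructor
  · intro h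
    constructor
    · rcases hG : G.opts with _ | ⟨g, l⟩
      · rfl
      · exact absurd (List.eq_nil_iff_forall_not_mem.1 h _
          (add_left_mem_opts_add (by rw [hG]; exact List.mem_cons_self))) not_false
    · rcases hH : H.opts with _ | ⟨x, l⟩
      · rfl
      · exact absurd (List.eq_nil_iff_forall_not_mem.1 h _
          (add_right_mem_opts_add (by rw [hH]; exact List.mem_cons_self))) not_false
  · rintro ⟨h1, h2⟩
    rw [List.eq_nil_iff_forall_not_mem]
    intro k hk
    rcases mem_opts_add.1 hk with ⟨g, hg, _⟩ | ⟨h, hh, _⟩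
    · rw [h1] at hg; exact absurd hg List.not_mem_nil
    · rw [h2] at hh; exact absurd hh List.not_mem_nil

/-- A position with a `P`-position option is not a `P`-position. -/
theorem not_misereP_of_opt {G k : IGame} (hk : k ∈ G.opts) (hP : MisereP k) :
    ¬ MisereP G := fun h => ((misereP_iff G).1 h).2 k hk hP

theorem opt_not_misereP {G k : IGame} (h : MisereP G) (hk : k ∈ G.opts) :
    ¬ MisereP k := ((misereP_iff G).1 h).2 k hk

theorem sizeOf_lt_of_opt {x G : IGame} (h : x ∈ G.opts) : sizeOf x < sizeOf G := by
  cases G with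
  | mk l => exact sizeOf_lt_of_mem h

/-! ### Outcome-level sum lemmas -/

theorem P_zero_add (A : IGame) : MisereP (add zero A) ↔ MisereP A := by
  rw [misereP_iff, misereP_iff A]
  constructor
  · rintro ⟨hne, hall⟩
    refine ⟨fun h => hne (opts_add_eq_nil.2 ⟨rfl, h⟩), fun a ha hPa => ?_⟩
    have hs := sizeOf_lt_of_opt ha
    exact hall (add zero a) (add_right_mem_opts_add ha) ((P_zero_add a).2 hPa)
  · rintro ⟨hne, hall⟩
    refine ⟨fun h => hne (opts_add_eq_nil.1 h).2, fun k hk hPk => ?_⟩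
    rcases mem_opts_add.1 hk with ⟨g, hg, _⟩ | ⟨a, ha, rfl⟩
    · exact absurd hg List.not_mem_nil
    · have hs := sizeOf_lt_of_opt ha
      exact hall a ha ((P_zero_add a).1 hPk)
termination_by sizeOf A
decreasing_by all_goals omega

theorem P_swap (A B C : IGame) :
    MisereP (add A (add B C)) ↔ MisereP (add B (add A C)) := by
  rw [misereP_iff, misereP_iff]
  constructor
  · rintro ⟨hne, hall⟩
    constructor
    · intro h
      rcases opts_add_eq_nil.1 h with ⟨hB, h'⟩
      rcases opts_add_eq_nil.1 h' with ⟨hA, hC⟩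
      exact hne (opts_add_eq_nil.2 ⟨hA, opts_add_eq_nil.2 ⟨hB, hC⟩⟩)
    · intro k hk hPk
      rcases mem_opts_add.1 hk with ⟨b, hb, rfl⟩ | ⟨k', hk', rfl⟩
      · have hs := sizeOf_lt_of_opt hb
        exact hall (add A (add b C)) (add_right_mem_opts_add (add_left_mem_opts_add hb))
          ((P_swap A b C).2 hPk)
      · rcases mem_opts_add.1 hk' with ⟨a, ha, rfl⟩ | ⟨c, hc, rfl⟩
        · have hs := sizeOf_lt_of_opt ha
          exact hall (add a (add B C)) (add_left_mem_opts_add ha) ((P_swap a B C).2 hPk)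
        · have hs := sizeOf_lt_of_opt hc
          exact hall (add A (add B c)) (add_right_mem_opts_add (add_right_mem_opts_add hc))
            ((P_swap A B c).2 hPk)
  · rintro ⟨hne, hall⟩
    constructor
    · intro h
      rcases opts_add_eq_nil.1 h with ⟨hA, h'⟩
      rcases opts_add_eq_nil.1 h' with ⟨hB, hC⟩
      exact hne (opts_add_eq_nil.2 ⟨hB, opts_add_eq_nil.2 ⟨hA, hC⟩⟩)
    · intro k hk hPk
      rcases mem_opts_add.1 hk with ⟨a, ha, rfl⟩ | ⟨k', hk', rfl⟩
      · have hs := sizeOf_lt_of_opt ha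
        exact hall (add B (add a C)) (add_right_mem_opts_add (add_left_mem_opts_add ha))
          ((P_swap a B C).1 hPk)
      · rcases mem_opts_add.1 hk' with ⟨b, hb, rfl⟩ | ⟨c, hc, rfl⟩
        · have hs := sizeOf_lt_of_opt hb
          exact hall (add b (add A C)) (add_left_mem_opts_add hb) ((P_swap A b C).1 hPk)
        · have hs := sizeOf_lt_of_opt hc
          exact hall (add B (add A c)) (add_right_mem_opts_add (add_right_mem_opts_add hc))
            ((P_swap A B c).1 hPk)
termination_by sizeOf A + sizeOf B + sizeOf C
decreasing_by all_goals omega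

theorem P_assoc (A B C : IGame) :
    MisereP (add (add A B) C) ↔ MisereP (add A (add B C)) := by
  rw [misereP_iff, misereP_iff]
  constructor
  · rintro ⟨hne, hall⟩
    constructor
    · intro h
      rcases opts_add_eq_nil.1 h with ⟨hA, h'⟩
      rcases opts_add_eq_nil.1 h' with ⟨hB, hC⟩
      exact hne (opts_add_eq_nil.2 ⟨opts_add_eq_nil.2 ⟨hA, hB⟩, hC⟩)
    · intro k hk hPk
      rcases mem_opts_add.1 hk with ⟨a, ha, rfl⟩ | ⟨k', hk', rfl⟩
      · have hs := sizeOf_lt_of_opt ha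
        exact hall (add (add a B) C) (add_left_mem_opts_add (add_left_mem_opts_add ha))
          ((P_assoc a B C).2 hPk)
      · rcases mem_opts_add.1 hk' with ⟨b, hb, rfl⟩ | ⟨c, hc, rfl⟩
        · have hs := sizeOf_lt_of_opt hb
          exact hall (add (add A b) C)
            (add_left_mem_opts_add (add_right_mem_opts_add hb)) ((P_assoc A b C).2 hPk)
        · have hs := sizeOf_lt_of_opt hc
          exact hall (add (add A B) c) (add_right_mem_opts_add hc) ((P_assoc A B c).2 hPk)
  · rintro ⟨hne, hall⟩
    constructor
    · intro h
      rcases opts_add_eq_nil.1 h with ⟨h', hC⟩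
      rcases opts_add_eq_nil.1 h' with ⟨hA, hB⟩
      exact hne (opts_add_eq_nil.2 ⟨hA, opts_add_eq_nil.2 ⟨hB, hC⟩⟩)
    · intro k hk hPk
      rcases mem_opts_add.1 hk with ⟨k', hk', rfl⟩ | ⟨c, hc, rfl⟩
      · rcases mem_opts_add.1 hk' with ⟨a, ha, rfl⟩ | ⟨b, hb, rfl⟩
        · have hs := sizeOf_lt_of_opt ha
          exact hall (add a (add B C)) (add_left_mem_opts_add ha) ((P_assoc a B C).1 hPk)
        · have hs := sizeOf_lt_of_opt hb
          exact hall (add A (add b C))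
            (add_right_mem_opts_add (add_left_mem_opts_add hb)) ((P_assoc A b C).1 hPk)
      · have hs := sizeOf_lt_of_opt hc
        exact hall (add A (add B c)) (add_right_mem_opts_add (add_right_mem_opts_add hc))
          ((P_assoc A B c).1 hPk)
termination_by sizeOf A + sizeOf B + sizeOf C
decreasing_by all_goals omega

/-! ### MEquiv toolkit -/

/-- Inner associativity at outcome level. -/
theorem P_assoc_inner (A B C X : IGame) :
    MisereP (add A (add (add B C) X)) ↔ MisereP (add A (add B (add C X))) := by
  rw [misereP_iff, misereP_iff]
  constructor
  · rintro ⟨hne, hall⟩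
    constructor
    · intro h
      rcases opts_add_eq_nil.1 h with ⟨hA, h'⟩
      rcases opts_add_eq_nil.1 h' with ⟨hB, h''⟩
      rcases opts_add_eq_nil.1 h'' with ⟨hC, hX⟩
      exact hne (opts_add_eq_nil.2 ⟨hA, opts_add_eq_nil.2 ⟨opts_add_eq_nil.2 ⟨hB, hC⟩, hX⟩⟩)
    · intro k hk hPk
      rcases mem_opts_add.1 hk with ⟨a, ha, rfl⟩ | ⟨k', hk', rfl⟩
      · have hs := sizeOf_lt_of_opt ha
        exact hall (add a (add (add B C) X)) (add_left_mem_opts_add ha)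
          ((P_assoc_inner a B C X).2 hPk)
      · rcases mem_opts_add.1 hk' with ⟨b, hb, rfl⟩ | ⟨k'', hk'', rfl⟩
        · have hs := sizeOf_lt_of_opt hb
          exact hall (add A (add (add b C) X))
            (add_right_mem_opts_add (add_left_mem_opts_add (add_left_mem_opts_add hb)))
            ((P_assoc_inner A b C X).2 hPk)
        · rcases mem_opts_add.1 hk'' with ⟨c, hc, rfl⟩ | ⟨x, hx, rfl⟩
          · have hs := sizeOf_lt_of_opt hc
            exact hall (add A (add (add B c) X))
              (add_right_mem_opts_add (add_left_mem_opts_add (add_right_mem_opts_add hc)))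
              ((P_assoc_inner A B c X).2 hPk)
          · have hs := sizeOf_lt_of_opt hx
            exact hall (add A (add (add B C) x))
              (add_right_mem_opts_add (add_right_mem_opts_add hx))
              ((P_assoc_inner A B C x).2 hPk)
  · rintro ⟨hne, hall⟩
    constructor
    · intro h
      rcases opts_add_eq_nil.1 h with ⟨hA, h'⟩
      rcases opts_add_eq_nil.1 h' with ⟨h'', hX⟩
      rcases opts_add_eq_nil.1 h'' with ⟨hB, hC⟩
      exact hne (opts_add_eq_nil.2 ⟨hA, opts_add_eq_nil.2 ⟨hB, opts_add_eq_nil.2 ⟨hC, hX⟩⟩⟩)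
    · intro k hk hPk
      rcases mem_opts_add.1 hk with ⟨a, ha, rfl⟩ | ⟨k', hk', rfl⟩
      · have hs := sizeOf_lt_of_opt ha
        exact hall (add a (add B (add C X))) (add_left_mem_opts_add ha)
          ((P_assoc_inner a B C X).1 hPk)
      · rcases mem_opts_add.1 hk' with ⟨j, hj, rfl⟩ | ⟨x, hx, rfl⟩
        · rcases mem_opts_add.1 hj with ⟨b, hb, rfl⟩ | ⟨c, hc, rfl⟩
          · have hs := sizeOf_lt_of_opt hb
            exact hall (add A (add b (add C X)))
              (add_right_mem_opts_add (add_left_mem_opts_add hb))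
              ((P_assoc_inner A b C X).1 hPk)
          · have hs := sizeOf_lt_of_opt hc
            exact hall (add A (add B (add c X)))
              (add_right_mem_opts_add (add_right_mem_opts_add (add_left_mem_opts_add hc)))
              ((P_assoc_inner A B c X).1 hPk)
        · have hs := sizeOf_lt_of_opt hx
          exact hall (add A (add B (add C x)))
            (add_right_mem_opts_add (add_right_mem_opts_add (add_right_mem_opts_add hx)))
            ((P_assoc_inner A B C x).1 hPk)
termination_by sizeOf A + sizeOf B + sizeOf C + sizeOf X
decreasing_by all_goals omega

theorem mequiv_zero_add (A : IGame) : MEquiv (add zero A) A := fun X =>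
  ((P_assoc zero A X).trans (P_zero_add (add A X)))

theorem mequiv_add_zero (A : IGame) : MEquiv (add A zero) A := fun X =>
  (P_assoc A zero X).trans ((P_swap A zero X).trans (P_zero_add (add A X)))

theorem mequiv_add_comm (A B : IGame) : MEquiv (add A B) (add B A) := fun X =>
  ((P_assoc A B X).trans (P_swap A B X)).trans (P_assoc B A X).symm

theorem mequiv_add_right {A B : IGame} (h : MEquiv A B) (C : IGame) :
    MEquiv (add A C) (add B C) := fun X =>
  ((P_assoc A C X).trans (h (add C X))).trans (P_assoc B C X).symm

theorem mequiv_add_left {A B : IGame} (h : MEquiv A B) (C : IGame) :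
    MEquiv (add C A) (add C B) :=
  mequiv_trans (mequiv_add_comm C A)
    (mequiv_trans (mequiv_add_right h C) (mequiv_add_comm B C))

theorem mequiv_add_assoc (A B C : IGame) :
    MEquiv (add (add A B) C) (add A (add B C)) := fun X => by
  rw [P_assoc (add A B) C X, P_assoc A B (add C X), P_assoc A (add B C) X]
  exact (P_assoc_inner A B C X).symm

theorem mequiv_swap (A B C : IGame) : MEquiv (add A (add B C)) (add B (add A C)) := fun X => by
  rw [P_assoc A (add B C) X, P_assoc B (add A C) X,
    P_assoc_inner A B C X, P_assoc_inner B A C X]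
  exact P_swap A B (add C X)

/-! ### Mate -/

theorem mem_opts_mate {G : IGame} (h : G.opts ≠ []) {y : IGame} :
    y ∈ (mate G).opts ↔ ∃ g ∈ G.opts, y = mate g := by
  cases G with
  | mk l =>
    cases l with
    | nil => exact absurd rfl h
    | cons x l =>
      rw [mate]
      simp only [opts_mk, List.mem_map, List.mem_attach, true_and, Subtype.exists]
      constructor
      · rintro ⟨a, ha, rfl⟩; exact ⟨a, ha, rfl⟩
      · rintro ⟨a, ha, rfl⟩; exact ⟨a, ha, rfl⟩

theorem opts_star : star.opts = [zero] := rfl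

theorem mate_opt_mem {G g : IGame} (hg : g ∈ G.opts) : mate g ∈ (mate G).opts :=
  (mem_opts_mate (List.ne_nil_of_mem hg)).2 ⟨g, hg, rfl⟩

theorem not_misereP_zero : ¬ MisereP zero := fun h => ((misereP_iff zero).1 h).1 rfl

theorem P_add_mate (G : IGame) : MisereP (add G (mate G)) := by
  rcases hG : G.opts with _ | ⟨x, l⟩
  · have hGz : G = zero := by cases G; cases hG; rfl
    subst hGz
    have hm : mate zero = star := by rw [zero, mate]
    rw [hm, misereP_iff]
    constructor
    · intro h
      have : star.opts = [] := (opts_add_eq_nil.1 h).2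
      rw [opts_star] at this
      exact List.cons_ne_nil zero [] this
    · intro k hk hPk
      rcases mem_opts_add.1 hk with ⟨g, hg, rfl⟩ | ⟨h, hh, rfl⟩
      · exact absurd hg List.not_mem_nil
      · rw [opts_star, List.mem_singleton] at hh
        subst hh
        exact ((misereP_iff _).1 hPk).1 (opts_add_eq_nil.2 ⟨rfl, rfl⟩)
  · have hne : G.opts ≠ [] := by rw [hG]; exact List.cons_ne_nil x l
    rw [misereP_iff]
    constructor
    · intro h
      exact hne (opts_add_eq_nil.1 h).1
    · intro k hk hPk
      rcases mem_opts_add.1 hk with ⟨g, hg, rfl⟩ | ⟨m, hm, rfl⟩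
      · have hs := sizeOf_lt_of_opt hg
        exact opt_not_misereP hPk
          (add_right_mem_opts_add (mate_opt_mem hg)) (P_add_mate g)
      · rcases (mem_opts_mate hne).1 hm with ⟨g, hg, rfl⟩
        have hs := sizeOf_lt_of_opt hg
        exact opt_not_misereP hPk (add_left_mem_opts_add hg) (P_add_mate g)
termination_by sizeOf G
decreasing_by all_goals omega

/-! ### Star is a unit -/

theorem zero_mem_opts_star : zero ∈ star.opts := by
  rw [opts_star]; exact List.mem_singleton.2 rfl

theorem not_P_star_add_of_P {X : IGame} (hX : MisereP X) : ¬ MisereP (add star X) :=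
  not_misereP_of_opt (add_left_mem_opts_add zero_mem_opts_star) ((P_zero_add X).2 hX)

theorem P_ss_add (X : IGame) : MisereP (add (add star star) X) ↔ MisereP X := by
  constructor
  · intro h
    have h1 : ¬ MisereP (add (add zero star) X) :=
      opt_not_misereP h (add_left_mem_opts_add (add_left_mem_opts_add zero_mem_opts_star))
    have h2 : ¬ MisereP (add star X) := fun hP => h1 ((mequiv_zero_add star X).2 hP)
    have h3 : ∀ x ∈ X.opts, ¬ MisereP x := by
      intro x hx hPx
      have hs := sizeOf_lt_of_opt hx
      exact opt_not_misereP h (add_right_mem_opts_add hx) ((P_ss_add x).2 hPx)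
    rw [misereP_iff]
    refine ⟨?_, h3⟩
    intro hXnil
    apply h2
    rw [misereP_iff]
    constructor
    · intro hnil
      have := (opts_add_eq_nil.1 hnil).1
      rw [opts_star] at this
      exact List.cons_ne_nil zero [] this
    · intro k hk hPk
      rcases mem_opts_add.1 hk with ⟨g, hg, rfl⟩ | ⟨x, hx, rfl⟩
      · rw [opts_star, List.mem_singleton] at hg
        subst hg
        have : MisereP X := (P_zero_add X).1 hPk
        exact ((misereP_iff X).1 this).1 hXnil
      · rw [hXnil] at hx
        exact absurd hx List.not_mem_nil
  · intro hX
    rw [misereP_iff]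
    constructor
    · intro hnil
      have := (opts_add_eq_nil.1 hnil).1
      have h2 := opts_add_eq_nil.1 this
      rw [opts_star] at h2
      exact List.cons_ne_nil zero [] h2.1
    · intro k hk hPk
      rcases mem_opts_add.1 hk with ⟨j, hj, rfl⟩ | ⟨x, hx, rfl⟩
      · rcases mem_opts_add.1 hj with ⟨g, hg, rfl⟩ | ⟨g, hg, rfl⟩
        · rw [opts_star, List.mem_singleton] at hg
          subst hg
          exact not_P_star_add_of_P hX ((mequiv_zero_add star X).1 hPk)
        · rw [opts_star, List.mem_singleton] at hg
          subst hg
          exact not_P_star_add_of_P hX ((mequiv_add_zero star X).1 hPk)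
      · have hs := sizeOf_lt_of_opt hx
        exact opt_not_misereP hX hx ((P_ss_add x).1 hPk)
termination_by sizeOf X
decreasing_by all_goals omega

theorem star_star : MEquiv (add star star) zero := fun X =>
  (P_ss_add X).trans (P_zero_add X).symm

/-! ### Units -/

theorem isUnit_zero : IsUnitG zero := ⟨zero, mequiv_add_zero zero⟩

theorem isUnit_star : IsUnitG star := ⟨star, star_star⟩

theorem isUnit_inv {U V : IGame} (h : MEquiv (add U V) zero) : IsUnitG V :=
  ⟨U, mequiv_trans (mequiv_add_comm V U) h⟩

theorem isUnit_add {U W : IGame} (hU : IsUnitG U) (hW : IsUnitG W) :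
    IsUnitG (add U W) := by
  obtain ⟨V, hV⟩ := hU
  obtain ⟨V', hV'⟩ := hW
  refine ⟨add V V', ?_⟩
  have e1 : MEquiv (add (add U W) (add V V')) (add (add U V) (add W V')) := by
    refine mequiv_trans (mequiv_add_assoc U W (add V V')) ?_
    refine mequiv_trans (mequiv_add_left ?_ U) (mequiv_symm (mequiv_add_assoc U V (add W V')))
    exact mequiv_swap W V V'
  refine mequiv_trans e1 ?_
  refine mequiv_trans (mequiv_add_right hV (add W V')) ?_
  exact mequiv_trans (mequiv_zero_add (add W V')) hV'

/-! ### Flatness of the misère order -/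

/-- `A ≼ B`: every context where `A` is a `P`-position is one for `B`. -/
def PreceqG (A B : IGame) : Prop := ∀ X, MisereP (add A X) → MisereP (add B X)

/-- The misère order on impartial games is flat: one-sided outcome domination
implies misère equality. -/
theorem flat (A B : IGame) (h : PreceqG A B) : MEquiv A B := by
  by_contra hne
  simp only [MEquiv, not_forall] at hne
  obtain ⟨X₀, hX₀iff⟩ := hne
  have hA0 : ¬ MisereP (add A X₀) := fun hA => hX₀iff (iff_of_true hA (h X₀ hA))
  have hB0 : MisereP (add B X₀) := by
    by_contra hB
    exact hX₀iff (iff_of_false hA0 hB)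
  by_cases hcase1 : ∃ b ∈ B.opts, MEquiv b A
  · obtain ⟨b₀, hb₀, hb₀e⟩ := hcase1
    have h1 : MisereP (add A (mate A)) := P_add_mate A
    have h2 : MisereP (add B (mate A)) := h _ h1
    exact opt_not_misereP h2 (add_left_mem_opts_add hb₀) ((hb₀e (mate A)).2 h1)
  by_cases hcase2 : ∃ a ∈ A.opts, MEquiv a B
  · obtain ⟨a₀, ha₀, ha₀e⟩ := hcase2
    have h1 : MisereP (add A (mate A)) := P_add_mate A
    have h2 : MisereP (add B (mate A)) := h _ h1
    exact opt_not_misereP h1 (add_left_mem_opts_add ha₀) ((ha₀e (mate A)).2 h2)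
  push_neg at hcase2
  have hwit : ∀ a ∈ A.opts, ∃ t, MisereP (add a t) ∧ ¬ MisereP (add B t) := by
    intro a ha
    by_contra hw
    push_neg at hw
    have hs := sizeOf_lt_of_opt ha
    exact hcase2 a ha (flat a B (fun t ht => hw t ht))
  choose tfun htP htN using hwit
  set V : IGame := mk (X₀ :: A.opts.attach.map (fun a => tfun a.1 a.2)) with hVdef
  have hmemV : ∀ a (ha : a ∈ A.opts), tfun a ha ∈ V.opts := by
    intro a ha
    rw [hVdef, opts_mk]
    exact List.mem_cons_of_mem _ (List.mem_map.2 ⟨⟨a, ha⟩, List.mem_attach _ _, rfl⟩)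
  have hX₀V : X₀ ∈ V.opts := by
    rw [hVdef, opts_mk]; exact List.mem_cons_self
  have hPAV : MisereP (add A V) := by
    rw [misereP_iff]
    constructor
    · intro hnil
      exact absurd ((opts_add_eq_nil.1 hnil).2) (List.ne_nil_of_mem hX₀V)
    · intro k hk hPk
      rcases mem_opts_add.1 hk with ⟨a, ha, rfl⟩ | ⟨v, hv, rfl⟩
      · exact opt_not_misereP hPk (add_right_mem_opts_add (hmemV a ha)) (htP a ha)
      · rw [hVdef, opts_mk, List.mem_cons] at hv
        rcases hv with rfl | hv
        · exact hA0 hPk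
        · obtain ⟨⟨a, ha⟩, -, rfl⟩ := List.mem_map.1 hv
          exact opt_not_misereP hPk (add_left_mem_opts_add ha) (htP a ha)
  exact opt_not_misereP (h V hPAV) (add_right_mem_opts_add hX₀V) hB0
termination_by sizeOf A + sizeOf B
decreasing_by all_goals omega

theorem not_preceq_of_not_mequiv {A B : IGame} (h : ¬ MEquiv A B) :
    ∃ t, MisereP (add A t) ∧ ¬ MisereP (add B t) := by
  by_contra hw
  push_neg at hw
  exact h (flat A B (fun t ht => hw t ht))

/-! ### Linked -/

theorem P_zero_star : MisereP (add zero star) := by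
  rw [misereP_iff]
  constructor
  · intro h
    have := (opts_add_eq_nil.1 h).2
    rw [opts_star] at this
    exact List.cons_ne_nil zero [] this
  · intro k hk hPk
    rcases mem_opts_add.1 hk with ⟨g, hg, rfl⟩ | ⟨x, hx, rfl⟩
    · exact absurd hg List.not_mem_nil
    · rw [opts_star, List.mem_singleton] at hx
      subst hx
      exact ((misereP_iff _).1 hPk).1 (opts_add_eq_nil.2 ⟨rfl, rfl⟩)

theorem not_linked_opt {G g : IGame} (hg : g ∈ G.opts) : ¬ Linked G g :=
  fun ⟨T, h1, h2⟩ => opt_not_misereP h1 (add_left_mem_opts_add hg) h2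

theorem linked_congr {A A' B : IGame} (h : MEquiv A A') : Linked A B → Linked A' B :=
  fun ⟨T, h1, h2⟩ => ⟨T, (h T).1 h1, h2⟩

/-- Key lemma: if no option of `K` equals `B` and no option of `B` equals `K`,
then `K` and `B` are linked. -/
theorem linked_of_no_eq {K B : IGame} (hK : ∀ k ∈ K.opts, ¬ MEquiv k B)
    (hB : ∀ b ∈ B.opts, ¬ MEquiv b K) : Linked K B := by
  by_cases hnil : K.opts = [] ∧ B.opts = []
  · have hKz : K = zero := by cases K; cases hnil.1; rfl
    have hBz : B = zero := by cases B; cases hnil.2; rfl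
    subst hKz; subst hBz
    exact ⟨star, P_zero_star, P_zero_star⟩
  · have hKw : ∀ k ∈ K.opts, ∃ t, MisereP (add k t) ∧ ¬ MisereP (add B t) :=
      fun k hk => not_preceq_of_not_mequiv (hK k hk)
    have hBw : ∀ b ∈ B.opts, ∃ s, MisereP (add b s) ∧ ¬ MisereP (add K s) :=
      fun b hb => not_preceq_of_not_mequiv (hB b hb)
    choose tf htP htN using hKw
    choose sf hsP hsN using hBw
    set T : IGame := mk (K.opts.attach.map (fun k => tf k.1 k.2) ++
      B.opts.attach.map (fun b => sf b.1 b.2)) with hTdef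
    have hmemT : ∀ k (hk : k ∈ K.opts), tf k hk ∈ T.opts := by
      intro k hk
      rw [hTdef, opts_mk]
      exact List.mem_append_left _ (List.mem_map.2 ⟨⟨k, hk⟩, List.mem_attach _ _, rfl⟩)
    have hmemS : ∀ b (hb : b ∈ B.opts), sf b hb ∈ T.opts := by
      intro b hb
      rw [hTdef, opts_mk]
      exact List.mem_append_right _ (List.mem_map.2 ⟨⟨b, hb⟩, List.mem_attach _ _, rfl⟩)
    have hTchar : ∀ t ∈ T.opts, (∃ k, ∃ hk : k ∈ K.opts, t = tf k hk) ∨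
        (∃ b, ∃ hb : b ∈ B.opts, t = sf b hb) := by
      intro t ht
      rw [hTdef, opts_mk, List.mem_append] at ht
      rcases ht with ht | ht
      · obtain ⟨⟨k, hk⟩, -, rfl⟩ := List.mem_map.1 ht
        exact Or.inl ⟨k, hk, rfl⟩
      · obtain ⟨⟨b, hb⟩, -, rfl⟩ := List.mem_map.1 ht
        exact Or.inr ⟨b, hb, rfl⟩
    have hTne : T.opts ≠ [] := by
      intro h
      rw [hTdef, opts_mk] at h
      rcases List.append_eq_nil_iff.1 h with ⟨h1, h2⟩
      rw [List.map_eq_nil_iff] at h1 h2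
      exact hnil ⟨by simpa using congrArg (List.map Subtype.val) h1,
        by simpa using congrArg (List.map Subtype.val) h2⟩
    refine ⟨T, ?_, ?_⟩
    · rw [misereP_iff]
      constructor
      · intro h
        exact hTne (opts_add_eq_nil.1 h).2
      · intro j hj hPj
        rcases mem_opts_add.1 hj with ⟨k, hk, rfl⟩ | ⟨t, ht, rfl⟩
        · exact opt_not_misereP hPj (add_right_mem_opts_add (hmemT k hk)) (htP k hk)
        · rcases hTchar t ht with ⟨k, hk, rfl⟩ | ⟨b, hb, rfl⟩
          · exact opt_not_misereP hPj (add_left_mem_opts_add hk) (htP k hk)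
          · exact hsN b hb hPj
    · rw [misereP_iff]
      constructor
      · intro h
        exact hTne (opts_add_eq_nil.1 h).2
      · intro j hj hPj
        rcases mem_opts_add.1 hj with ⟨b, hb, rfl⟩ | ⟨t, ht, rfl⟩
        · exact opt_not_misereP hPj (add_right_mem_opts_add (hmemS b hb)) (hsP b hb)
        · rcases hTchar t ht with ⟨k, hk, rfl⟩ | ⟨b, hb, rfl⟩
          · exact htN k hk hPj
          · exact opt_not_misereP hPj (add_left_mem_opts_add hb) (hsP b hb)

/-! ### Option realization and units -/

theorem opt_realization {K G g' : IGame} (hKG : MEquiv K G) (hG : Canonical G)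
    (hg' : g' ∈ G.opts) : ∃ k ∈ K.opts, MEquiv k g' := by
  by_contra hno
  push_neg at hno
  have hb : ∀ b ∈ g'.opts, ¬ MEquiv b K := by
    intro b hb hbe
    exact hG G Relation.ReflTransGen.refl ⟨g', hg', b, hb, mequiv_trans hbe hKG⟩
  exact not_linked_opt hg' (linked_congr hKG (linked_of_no_eq hno hb))

theorem not_unit_of_canonical {G P₁ : IGame} (hG : Canonical G) (h₁ : P₁ ∈ G.opts)
    (hP₁ : ¬ IsUnitG P₁) : ¬ IsUnitG G := by
  rintro ⟨V, hV⟩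
  have hnl : ¬ Linked (add G V) (add P₁ V) := not_linked_opt (add_left_mem_opts_add h₁)
  have hnl0 : ¬ Linked zero (add P₁ V) := fun hl => hnl (linked_congr (mequiv_symm hV) hl)
  have hmem : ∃ b ∈ (add P₁ V).opts, MEquiv b zero := by
    by_contra hno
    push_neg at hno
    exact hnl0 (linked_of_no_eq (fun k hk => absurd hk List.not_mem_nil) hno)
  obtain ⟨b, hbmem, hb0⟩ := hmem
  rcases mem_opts_add.1 hbmem with ⟨p', hp', rfl⟩ | ⟨v', hv', rfl⟩
  · have hpG : MEquiv p' G := by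
      refine mequiv_trans (mequiv_symm (mequiv_add_zero p')) ?_
      refine mequiv_trans (mequiv_add_left (mequiv_symm hV) p') ?_
      refine mequiv_trans (mequiv_swap p' G V) ?_
      exact mequiv_trans (mequiv_add_left hb0 G) (mequiv_add_zero G)
    exact hG G Relation.ReflTransGen.refl ⟨P₁, h₁, p', hp', hpG⟩
  · exact hP₁ ⟨v', hb0⟩

/-! ### Associates -/

theorem assoc_symm {A B : IGame} (h : Assoc A B) : Assoc B A := by
  obtain ⟨U, hU, hE⟩ := h
  obtain ⟨W, hW⟩ := hU
  refine ⟨W, isUnit_inv hW, mequiv_symm ?_⟩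
  exact mequiv_trans (mequiv_add_right hE W)
    (mequiv_trans (mequiv_add_assoc B U W)
      (mequiv_trans (mequiv_add_left hW B) (mequiv_add_zero B)))

theorem assoc_trans {A B C : IGame} (h1 : Assoc A B) (h2 : Assoc B C) : Assoc A C := by
  obtain ⟨U, hU, hE⟩ := h1
  obtain ⟨U', hU', hE'⟩ := h2
  exact ⟨add U' U, isUnit_add hU' hU,
    mequiv_trans hE (mequiv_trans (mequiv_add_right hE' U) (mequiv_add_assoc C U' U))⟩

theorem isUnit_of_assoc_zero {A : IGame} (h : Assoc A zero) : IsUnitG A := by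
  obtain ⟨U, hU, hE⟩ := h
  obtain ⟨W, hW⟩ := hU
  exact ⟨W, mequiv_trans (mequiv_add_right hE W)
    (mequiv_trans (mequiv_add_right (mequiv_zero_add U) W) hW)⟩

theorem assoc_right_of_unit {G H X : IGame} (hGHX : MEquiv G (add H X))
    (hX : IsUnitG X) : Assoc H G := by
  obtain ⟨W, hW⟩ := hX
  refine ⟨W, isUnit_inv hW, mequiv_symm ?_⟩
  exact mequiv_trans (mequiv_add_right hGHX W)
    (mequiv_trans (mequiv_add_assoc H X W)
      (mequiv_trans (mequiv_add_left hW H) (mequiv_add_zero H)))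

/-- If `G` is in simplest form and has at least three prime options that are pairwise
non-associated, then `G` is prime. -/
theorem prime_of_three_prime_options (G : IGame) (hG : Canonical G)
    (P₁ P₂ P₃ : IGame) (h₁ : P₁ ∈ G.opts) (h₂ : P₂ ∈ G.opts) (h₃ : P₃ ∈ G.opts)
    (hp₁ : PrimeG P₁) (hp₂ : PrimeG P₂) (hp₃ : PrimeG P₃)
    (h₁₂ : ¬ Assoc P₁ P₂) (h₁₃ : ¬ Assoc P₁ P₃) (h₂₃ : ¬ Assoc P₂ P₃) :
    PrimeG G := by
  constructor
  · exact not_unit_of_canonical hG h₁ hp₁.1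
  · rintro H ⟨X, hGHX⟩
    have hKG : MEquiv (add H X) G := mequiv_symm hGHX
    -- every prime option is realized as an option of H + X
    have hside : ∀ Pi : IGame, Pi ∈ G.opts → IsPart X Pi ∨ IsPart H Pi := by
      intro Pi hPi
      obtain ⟨k, hk, hke⟩ := opt_realization hKG hG hPi
      rcases mem_opts_add.1 hk with ⟨h', hh', rfl⟩ | ⟨x', hx', rfl⟩
      · exact Or.inl ⟨h', mequiv_trans (mequiv_symm hke) (mequiv_add_comm h' X)⟩
      · exact Or.inr ⟨x', mequiv_symm hke⟩
    -- if two primes both have X as a part, then X is a unit or the primes are associated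
    have helperL : ∀ Pi Pj : IGame, PrimeG Pi → PrimeG Pj → ¬ Assoc Pi Pj →
        IsPart X Pi → IsPart X Pj → Assoc H G := by
      intro Pi Pj hpi hpj hij hXi hXj
      rcases hpi.2 X hXi with hXz | hXPi
      · exact assoc_right_of_unit hGHX (isUnit_of_assoc_zero hXz)
      · rcases hpj.2 X hXj with hXz | hXPj
        · exact assoc_right_of_unit hGHX (isUnit_of_assoc_zero hXz)
        · exact absurd (assoc_trans (assoc_symm hXPi) hXPj) hij
    have helperR : ∀ Pi Pj : IGame, PrimeG Pi → PrimeG Pj → ¬ Assoc Pi Pj →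
        IsPart H Pi → IsPart H Pj → Assoc H zero := by
      intro Pi Pj hpi hpj hij hHi hHj
      rcases hpi.2 H hHi with hHz | hHPi
      · exact hHz
      · rcases hpj.2 H hHj with hHz | hHPj
        · exact hHz
        · exact absurd (assoc_trans (assoc_symm hHPi) hHPj) hij
    rcases hside P₁ h₁ with L1 | R1 <;> rcases hside P₂ h₂ with L2 | R2 <;>
      rcases hside P₃ h₃ with L3 | R3
    · exact Or.inr (helperL P₁ P₂ hp₁ hp₂ h₁₂ L1 L2)
    · exact Or.inr (helperL P₁ P₂ hp₁ hp₂ h₁₂ L1 L2)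
    · exact Or.inr (helperL P₁ P₃ hp₁ hp₃ h₁₃ L1 L3)
    · exact Or.inl (helperR P₂ P₃ hp₂ hp₃ h₂₃ R2 R3)
    · exact Or.inr (helperL P₂ P₃ hp₂ hp₃ h₂₃ L2 L3)
    · exact Or.inl (helperR P₁ P₃ hp₁ hp₃ h₁₃ R1 R3)
    · exact Or.inl (helperR P₁ P₂ hp₁ hp₂ h₁₂ R1 R2)
    · exact Or.inl (helperR P₁ P₂ hp₁ hp₂ h₁₂ R1 R2)
end IGame
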